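/- Let p be a prime number, let n ≥ 1 and n₁, n₂, n₃ ≥ 0 be integers, and let z be an integer. If gcd(n, n₁, n₂, n₃) divides z, and gcd(np, n₁)·gcd(np, n₂)·gcd(np, n₃) divides z·n²·p², then gcd(np, n₁, n₂, n₃) divides z. -/

import Mathlib

/-- Let `p` be a prime number, let `n ≥ 1` and `n₁, n₂, n₃ ≥ 0` be integers,
and let `z` be an integer. If `gcd(n, n₁, n₂, n₃)` divides `z`, and
`gcd(np, n₁)·gcd(np, n₂)·gcd(np, n₃)` divides `z·n²·p²`, then `gcd(np, n₁, n₂, n₃)`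
divides `z`. -/
theorem stmt8 (p : ℕ) (hp : p.Prime) (n : ℕ) (hn : 1 ≤ n) (n₁ n₂ n₃ : ℕ) (z : ℤ)
    (h1 : (Nat.gcd n (Nat.gcd n₁ (Nat.gcd n₂ n₃)) : ℤ) ∣ z)
    (h2 : ((Nat.gcd (n * p) n₁ * Nat.gcd (n * p) n₂ * Nat.gcd (n * p) n₃ : ℕ) : ℤ) ∣
      z * (n : ℤ) ^ 2 * (p : ℤ) ^ 2) :
    (Nat.gcd (n * p) (Nat.gcd n₁ (Nat.gcd n₂ n₃)) : ℤ) ∣ z := by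
  rcases eq_or_ne z 0 with rfl | hz
  · exact dvd_zero _
  have hn0 : n ≠ 0 := by omega
  have hp0 : p ≠ 0 := hp.ne_zero
  set N := Nat.gcd n₁ (Nat.gcd n₂ n₃) with hNdef
  set d := Nat.gcd n N with hddef
  set G := Nat.gcd (n * p) N with hGdef
  -- move to ℕ
  set z' := z.natAbs with hz'def
  have hz'0 : z' ≠ 0 := Int.natAbs_ne_zero.mpr hz
  rw [Int.natCast_dvd] at h1 ⊢
  rw [Int.natCast_dvd] at h2
  have h2' : Nat.gcd (n * p) n₁ * Nat.gcd (n * p) n₂ * Nat.gcd (n * p) n₃ ∣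
      z' * n ^ 2 * p ^ 2 := by
    have he : (z * (n : ℤ) ^ 2 * (p : ℤ) ^ 2).natAbs = z' * n ^ 2 * p ^ 2 := by
      simp [Int.natAbs_mul, Int.natAbs_pow, hz'def]
    rwa [he] at h2
  -- basic divisibilities
  have hdG : d ∣ G :=
    Nat.dvd_gcd ((Nat.gcd_dvd_left n N).trans (dvd_mul_right n p)) (Nat.gcd_dvd_right n N)
  have hGdp : G ∣ d * p := by
    have h : G ∣ Nat.gcd (n * p) (N * p) :=
      Nat.dvd_gcd (Nat.gcd_dvd_left _ _)
        ((Nat.gcd_dvd_right _ _).trans (dvd_mul_right N p))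
    rwa [Nat.gcd_mul_right] at h
  have hd0 : d ≠ 0 := Nat.gcd_ne_zero_left hn0
  obtain ⟨c, hc⟩ := hdG
  have hcp : c ∣ p := by
    have := hGdp
    rw [hc] at this
    exact (mul_dvd_mul_iff_left hd0).mp this
  rcases (Nat.Prime.eq_one_or_self_of_dvd hp c hcp) with hc1 | hcP
  · -- G = d, done
    rw [hc, hc1, mul_one]
    exact h1
  -- G = d * p case
  rw [hcP] at hc
  set a := n.factorization p with hadef
  -- claim : p ^ (a+1) ∣ N
  have hpaN : p ^ (a + 1) ∣ N := by
    rcases eq_or_ne N 0 with hN0 | hN0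
    · simp [hN0]
    have hdpN : d * p ∣ N := hc ▸ Nat.gcd_dvd_right (n * p) N
    have hfd : d.factorization p = min a (N.factorization p) := by
      rw [hddef, Nat.factorization_gcd hn0 hN0]
      simp [Finsupp.inf_apply, hadef]
    have hdp0 : d * p ≠ 0 := by positivity
    have h1' : (d * p).factorization p ≤ N.factorization p :=
      (Nat.factorization_le_iff_dvd hdp0 hN0).mpr hdpN p
    rw [Nat.factorization_mul hd0 hp0, Finsupp.add_apply, hp.factorization_self, hfd] at h1'
    have : a + 1 ≤ N.factorization p := by omega
    exact (hp.pow_dvd_iff_le_factorization hN0).mpr this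
  have hpanp : p ^ (a + 1) ∣ n * p := by
    rw [pow_succ]
    exact mul_dvd_mul (Nat.ordProj_dvd n p) dvd_rfl
  have key : ∀ m, N ∣ m → p ^ (a + 1) ∣ Nat.gcd (n * p) m := fun m hm =>
    Nat.dvd_gcd hpanp (hpaN.trans hm)
  have hprod : p ^ (3 * (a + 1)) ∣ z' * n ^ 2 * p ^ 2 := by
    calc p ^ (3 * (a + 1)) = p ^ (a+1) * p ^ (a+1) * p ^ (a+1) := by ring
    _ ∣ Nat.gcd (n * p) n₁ * Nat.gcd (n * p) n₂ * Nat.gcd (n * p) n₃ :=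
        mul_dvd_mul (mul_dvd_mul (key n₁ (Nat.gcd_dvd_left _ _))
          (key n₂ ((Nat.gcd_dvd_right _ _).trans (Nat.gcd_dvd_left _ _))))
          (key n₃ ((Nat.gcd_dvd_right _ _).trans (Nat.gcd_dvd_right _ _)))
    _ ∣ z' * n ^ 2 * p ^ 2 := h2'
  have hZ0 : z' * n ^ 2 * p ^ 2 ≠ 0 := by positivity
  have hval : 3 * (a + 1) ≤ (z' * n ^ 2 * p ^ 2).factorization p :=
    (hp.pow_dvd_iff_le_factorization hZ0).mp hprod
  have hfac : (z' * n ^ 2 * p ^ 2).factorization p = z'.factorization p + 2 * a + 2 := by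
    rw [Nat.factorization_mul (by positivity) (by positivity),
        Nat.factorization_mul hz'0 (by positivity),
        Nat.factorization_pow, Nat.factorization_pow]
    simp [hp.factorization_self, hadef]
  have hpz : p ^ (a + 1) ∣ z' := by
    apply (hp.pow_dvd_iff_le_factorization hz'0).mpr
    omega
  -- conclude : d * p ∣ z'
  rw [hc]
  set v := d.factorization p with hvdef
  have hva : v ≤ a := (Nat.factorization_le_iff_dvd hd0 hn0).mpr (Nat.gcd_dvd_left n N) p
  set d' := d / p ^ v with hd'def
  have hdd : p ^ v * d' = d := Nat.ordProj_mul_ordCompl_eq_self d p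
  have hpd' : ¬ p ∣ d' := Nat.not_dvd_ordCompl hp hd0
  have hcop : Nat.Coprime d' (p ^ (v + 1)) :=
    (Nat.Prime.coprime_iff_not_dvd hp).mpr hpd' |>.symm.pow_right _
  have hd'd : d' ∣ d := Dvd.intro_left _ hdd
  have hd'z : d' ∣ z' := hd'd.trans h1
  have hpvz : p ^ (v + 1) ∣ z' := (pow_dvd_pow p (by omega)).trans hpz
  have : d' * p ^ (v + 1) ∣ z' := hcop.mul_dvd_of_dvd_of_dvd hd'z hpvz
  have heq : d * p = d' * p ^ (v + 1) := by
    rw [← hdd, pow_succ]; ring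
  rwa [heq]
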